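/- Let V be a finite-dimensional real vector space, C ⊆ V a convex cone, D ∈ C, and c : V → ℝ a linear functional with c(D) < 0. Suppose every element of C is a finite nonnegative combination of elements of a set S ⊆ C, and that c(E) ≥ 0 for all E ∈ S except for elements proportional to D. Then every x ∈ C with c(x) < 0 can be written as x = λD + y with λ > 0, y ∈ C, and c(y) ≥ 0. -/
import Mathlib


/-- if every element of the convex cone `C` is a finite nonnegative
combination of elements of `S ⊆ C`, `D ∈ C` satisfies `c D < 0`, and `c E ≥ 0` for
all `E ∈ S` except elements proportional to `D`, then every `x ∈ C` with `c x < 0`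
can be written `x = λ • D + y` with `λ > 0`, `y ∈ C` and `c y ≥ 0`. -/
theorem stmt_16 {V : Type*} [AddCommGroup V] [Module ℝ V] [FiniteDimensional ℝ V]
    (C S : Set V) (hSC : S ⊆ C)
    (hCadd : ∀ x ∈ C, ∀ y ∈ C, x + y ∈ C)
    (hCsmul : ∀ (t : ℝ), 0 ≤ t → ∀ x ∈ C, t • x ∈ C)
    (D : V) (hD : D ∈ C)
    (c : V →ₗ[ℝ] ℝ) (hcD : c D < 0)
    (hgen : ∀ x ∈ C, ∃ (k : ℕ) (f : Fin k → ℝ) (g : Fin k → V),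
      (∀ i, 0 ≤ f i) ∧ (∀ i, g i ∈ S) ∧ x = ∑ i, f i • g i)
    (hS : ∀ E ∈ S, (¬ ∃ t : ℝ, E = t • D) → 0 ≤ c E) :
    ∀ x ∈ C, c x < 0 →
      ∃ l : ℝ, 0 < l ∧ ∃ y ∈ C, x = l • D + y ∧ 0 ≤ c y := by
  classical
  intro x hx hcx
  have h0C : (0 : V) ∈ C := by
    simpa using hCsmul 0 le_rfl D hD
  obtain ⟨k, f, g, hf, hg, hxsum⟩ := hgen x hx
  set T : Finset (Fin k) := Finset.univ.filter (fun i => ∃ t : ℝ, g i = t • D) with hT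
  -- choose proportionality constants
  have ht : ∀ i ∈ T, ∃ t : ℝ, g i = t • D := by
    intro i hi
    simpa [hT] using (Finset.mem_filter.mp hi).2
  choose t htspec using ht
  set μ : ℝ := ∑ i ∈ T.attach, f i.1 * t i.1 i.2 with hμ
  set y : V := ∑ i ∈ Tᶜ, f i • g i with hy
  have hyC : y ∈ C := by
    refine Finset.sum_induction _ (· ∈ C) (fun a b ha hb => hCadd a ha b hb) h0C ?_
    intro i _
    exact hCsmul (f i) (hf i) _ (hSC (hg i))
  have hcy : 0 ≤ c y := by
    rw [hy, map_sum]
    refine Finset.sum_nonneg fun i hi => ?_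
    have hni : ¬ ∃ t : ℝ, g i = t • D := by
      simpa [hT] using (Finset.mem_compl.mp hi)
    simp only [map_smul, smul_eq_mul]
    exact mul_nonneg (hf i) (hS _ (hg i) hni)
  have hxeq : x = μ • D + y := by
    rw [hxsum, ← Finset.sum_add_sum_compl T (fun i => f i • g i), hy, hμ]
    congr 1
    rw [Finset.sum_smul, ← Finset.sum_attach T (fun i => f i • g i)]
    refine Finset.sum_congr rfl fun i _ => ?_
    rw [htspec i.1 i.2, smul_smul]
  have hμpos : 0 < μ := by
    have hcx' : μ * c D + c y < 0 := by
      have := hcx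
      rw [hxeq] at this
      simpa [map_add, map_smul, smul_eq_mul] using this
    have : μ * c D < 0 := by linarith
    by_contra h
    push_neg at h
    nlinarith
  exact ⟨μ, hμpos, y, hyC, hxeq, hcy⟩
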